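/- The space of vector polynomials of degree at most k−1 in d variables admits the direct sum decomposition P_{k-1}(T; ℝ^d) = ∇P_k(T) ⊕ P_{k-2}(T; 𝕂)x, where P_{k-2}(T; 𝕂)x = {τ(x)x : τ ∈ P_{k-2}(T; 𝕂)}. -/

import Mathlib

open MvPolynomial

namespace GradDecomp
variable {d : ℕ}

def deg (μ : Fin d →₀ ℕ) : ℕ := μ.sum fun _ e => e

lemma deg_add (μ ν : Fin d →₀ ℕ) : deg (μ + ν) = deg μ + deg ν := by
  simp [deg, Finsupp.sum_add_index']

lemma deg_single (i : Fin d) (n : ℕ) : deg (Finsupp.single i n) = n := by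
  simp [deg]

lemma deg_eq_sum (μ : Fin d →₀ ℕ) : deg μ = ∑ i : Fin d, μ i :=
  Finsupp.sum_fintype _ _ (fun _ => rfl)

lemma coeff_pderiv (i : Fin d) (p : MvPolynomial (Fin d) ℝ) (ν : Fin d →₀ ℕ) :
    coeff ν (pderiv i p) = ((ν i : ℝ) + 1) * coeff (ν + Finsupp.single i 1) p := by
  induction p using MvPolynomial.induction_on' with
  | add p q hp hq => simp [hp, hq]; ring
  | monomial s a =>
    rw [pderiv_monomial]
    rcases Nat.eq_zero_or_pos (s i) with h0 | h0
    · have hne : s ≠ ν + Finsupp.single i 1 := by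
        intro h; apply absurd h0; rw [h]; simp
      simp [coeff_monomial, h0, hne]
    · have key : s - Finsupp.single i 1 = ν ↔ s = ν + Finsupp.single i 1 := by
        constructor
        · intro h; rw [← h, tsub_add_cancel_of_le]
          rwa [Finsupp.single_le_iff]
        · intro h; rw [h, add_tsub_cancel_right]
      rw [coeff_monomial]
      split_ifs with h
      · rw [coeff_monomial, if_pos (key.mp h)]
        have : s i = ν i + 1 := by rw [key.mp h]; simp
        rw [this]; push_cast; ring
      · rw [coeff_monomial, if_neg (fun hc => h (key.mpr hc))]
        ring

noncomputable def scaleDeg (c : ℕ) (p : MvPolynomial (Fin d) ℝ) : MvPolynomial (Fin d) ℝ :=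
  ∑ μ ∈ p.support, monomial μ (coeff μ p / (deg μ + c))

lemma coeff_scaleDeg (c : ℕ) (p : MvPolynomial (Fin d) ℝ) (ν : Fin d →₀ ℕ) :
    coeff ν (scaleDeg c p) = coeff ν p / (deg ν + c) := by
  rw [scaleDeg, MvPolynomial.coeff_sum]
  simp only [coeff_monomial]
  rw [Finset.sum_ite_eq' p.support ν (fun μ => coeff μ p / (deg μ + c))]
  split_ifs with h
  · rfl
  · rw [MvPolynomial.notMem_support_iff.mp h, zero_div]

lemma totalDegree_scaleDeg_le (c : ℕ) (p : MvPolynomial (Fin d) ℝ) :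
    (scaleDeg c p).totalDegree ≤ p.totalDegree := by
  apply Finset.sup_mono
  intro ν hν
  rw [MvPolynomial.mem_support_iff] at hν ⊢
  intro h
  rw [coeff_scaleDeg, h, zero_div] at hν
  exact hν rfl

lemma totalDegree_pderiv_le (i : Fin d) (p : MvPolynomial (Fin d) ℝ) :
    (pderiv i p).totalDegree ≤ p.totalDegree - 1 := by
  apply Finset.sup_le
  intro ν hν
  rw [MvPolynomial.mem_support_iff, coeff_pderiv] at hν
  have h2 : coeff (ν + Finsupp.single i 1) p ≠ 0 := right_ne_zero_of_mul hν
  have h3 := MvPolynomial.le_totalDegree (MvPolynomial.mem_support_iff.mpr h2)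
  have h4 : deg (ν + Finsupp.single i 1) = deg ν + 1 := by rw [deg_add, deg_single]
  have : deg ν + 1 ≤ p.totalDegree := by rw [← h4]; exact h3
  show deg ν ≤ p.totalDegree - 1
  omega

/-- The main algebraic identity: every vector polynomial decomposes. -/
lemma main_identity (v : Fin d → MvPolynomial (Fin d) ℝ) (j : Fin d) :
    v j = pderiv j (scaleDeg 0 (∑ i : Fin d, X i * v i))
      + ∑ i : Fin d, scaleDeg 2 (pderiv i (v j) - pderiv j (v i)) * X i := by
  apply MvPolynomial.ext
  intro μ
  set n := deg μ with hn
  have hn1 : ((n : ℝ) + 1) ≠ 0 := by positivity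
  set ej := Finsupp.single j (1:ℕ) with hej
  -- term A : gradient part
  have hA : coeff μ (pderiv j (scaleDeg 0 (∑ i : Fin d, X i * v i)))
      = (((μ j : ℝ) + 1) * ∑ i : Fin d,
          (if i ∈ (μ + ej).support then coeff (μ + ej - Finsupp.single i 1) (v i) else 0))
        / ((n : ℝ) + 1) := by
    rw [coeff_pderiv, coeff_scaleDeg, MvPolynomial.coeff_sum]
    simp only [coeff_X_mul']
    rw [deg_add, deg_single]
    push_cast
    ring
  -- term C/D : rotation part
  have hD : ∀ i : Fin d,
      (if i ∈ μ.support then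
          coeff (μ - Finsupp.single i 1) (scaleDeg 2 (pderiv i (v j) - pderiv j (v i))) else 0)
      = ((μ i : ℝ) * coeff μ (v j)
          - (if i ∈ μ.support then
              (((μ - Finsupp.single i 1 : Fin d →₀ ℕ) j : ℝ) + 1) * coeff (μ - Finsupp.single i 1 + ej) (v i)
            else 0)) / ((n : ℝ) + 1) := by
    intro i
    by_cases hi : i ∈ μ.support
    · have hile : Finsupp.single i 1 ≤ μ := by
        rw [Finsupp.single_le_iff]
        exact Nat.one_le_iff_ne_zero.mpr (Finsupp.mem_support_iff.mp hi)
      have hμi : 1 ≤ μ i := Nat.one_le_iff_ne_zero.mpr (Finsupp.mem_support_iff.mp hi)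
      have hdegsub : deg (μ - Finsupp.single i 1) = n - 1 := by
        have := deg_add (μ - Finsupp.single i 1) (Finsupp.single i 1)
        rw [tsub_add_cancel_of_le hile, deg_single] at this
        omega
      have hdenom : ((deg (μ - Finsupp.single i 1) : ℝ) + 2) = (n : ℝ) + 1 := by
        rw [hdegsub]
        have h1 : 1 ≤ n := by
          have := deg_add (μ - Finsupp.single i 1) (Finsupp.single i 1)
          rw [tsub_add_cancel_of_le hile, deg_single] at this
          omega
        push_cast [Nat.cast_sub h1]
        ring
      rw [if_pos hi, if_pos hi, coeff_scaleDeg]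
      rw [show ((deg (μ - Finsupp.single i 1) : ℝ) + (2:ℕ)) = (n:ℝ)+1 by push_cast; exact_mod_cast hdenom]
      rw [MvPolynomial.coeff_sub, coeff_pderiv, coeff_pderiv]
      rw [tsub_add_cancel_of_le hile]
      have happl : ((μ - Finsupp.single i 1 : Fin d →₀ ℕ) i : ℝ) + 1 = (μ i : ℝ) := by
        rw [Finsupp.tsub_apply, Finsupp.single_apply, if_pos rfl]
        push_cast [Nat.cast_sub hμi]
        ring
      rw [happl]
    · rw [if_neg hi, if_neg hi]
      have : (μ i : ℝ) = 0 := by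
        norm_cast
        exact Finsupp.notMem_support_iff.mp hi
      rw [this]
      simp
  -- combine
  rw [MvPolynomial.coeff_add, hA, MvPolynomial.coeff_sum]
  simp only [coeff_mul_X']
  rw [Finset.sum_congr rfl (fun i _ => hD i)]
  rw [← Finset.sum_div, ← add_div]
  rw [Finset.sum_sub_distrib]
  have hsum1 : ∑ i : Fin d, (μ i : ℝ) * coeff μ (v j) = (n : ℝ) * coeff μ (v j) := by
    rw [← Finset.sum_mul]
    congr 1
    rw [hn, deg_eq_sum]
    push_cast
    rfl
  have hcross : ((μ j : ℝ) + 1) * (∑ i : Fin d,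
        (if i ∈ (μ + ej).support then coeff (μ + ej - Finsupp.single i 1) (v i) else 0))
      - ∑ i : Fin d, (if i ∈ μ.support then
          (((μ - Finsupp.single i 1 : Fin d →₀ ℕ) j : ℝ) + 1) * coeff (μ - Finsupp.single i 1 + ej) (v i) else 0)
      = coeff μ (v j) := by
    rw [Finset.mul_sum, ← Finset.sum_sub_distrib]
    rw [Finset.sum_eq_single j]
    · -- i = j term
      have hmem : j ∈ (μ + ej).support := by
        rw [Finsupp.mem_support_iff, Finsupp.add_apply, hej, Finsupp.single_apply, if_pos rfl]
        omega
      rw [if_pos hmem, show μ + ej - Finsupp.single j 1 = μ by rw [hej]; exact add_tsub_cancel_right μ _]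
      by_cases hj : j ∈ μ.support
      · have hμj : 1 ≤ μ j := Nat.one_le_iff_ne_zero.mpr (Finsupp.mem_support_iff.mp hj)
        have hle : Finsupp.single j 1 ≤ μ := by rw [Finsupp.single_le_iff]; exact hμj
        rw [if_pos hj, show μ - Finsupp.single j 1 + ej = μ by rw [hej]; exact tsub_add_cancel_of_le hle]
        have : ((μ - Finsupp.single j 1 : Fin d →₀ ℕ) j : ℝ) + 1 = (μ j : ℝ) := by
          rw [Finsupp.tsub_apply, Finsupp.single_apply, if_pos rfl]
          push_cast [Nat.cast_sub hμj]
          ring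
        rw [this]
        ring
      · rw [if_neg hj]
        have : (μ j : ℝ) = 0 := by
          norm_cast
          exact Finsupp.notMem_support_iff.mp hj
        rw [this]
        ring
    · -- i ≠ j terms vanish
      intro i _ hij
      have hmemiff : i ∈ (μ + ej).support ↔ i ∈ μ.support := by
        rw [Finsupp.mem_support_iff, Finsupp.mem_support_iff, Finsupp.add_apply, hej,
          Finsupp.single_apply, if_neg (Ne.symm hij)]
        omega
      by_cases hi : i ∈ μ.support
      · have hile : Finsupp.single i 1 ≤ μ := by
          rw [Finsupp.single_le_iff]
          exact Nat.one_le_iff_ne_zero.mpr (Finsupp.mem_support_iff.mp hi)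
        rw [if_pos (hmemiff.mpr hi), if_pos hi]
        have e1 : μ - Finsupp.single i 1 + ej = μ + ej - Finsupp.single i 1 :=
          tsub_add_eq_add_tsub hile
        have e2 : ((μ - Finsupp.single i 1 : Fin d →₀ ℕ) j : ℝ) + 1 = (μ j : ℝ) + 1 := by
          rw [Finsupp.tsub_apply, Finsupp.single_apply, if_neg hij]
          simp
        rw [e1, e2]
        ring
      · rw [if_neg (fun h => hi (hmemiff.mp h)), if_neg hi]
        ring
    · intro h
      exact absurd (Finset.mem_univ j) h
  rw [hsum1, eq_div_iff hn1]
  set B := ∑ i : Fin d, (if i ∈ (μ + ej).support then coeff (μ + ej - Finsupp.single i 1) (v i) else 0) with hB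
  set S2 := ∑ i : Fin d, (if i ∈ μ.support then
      (((μ - Finsupp.single i 1 : Fin d →₀ ℕ) j : ℝ) + 1) * coeff (μ - Finsupp.single i 1 + ej) (v i) else 0) with hS2
  linear_combination -hcross

end GradDecomp

namespace GradDecomp2
open GradDecomp
variable {d : ℕ}

lemma scaleDeg_neg (c : ℕ) (p : MvPolynomial (Fin d) ℝ) :
    scaleDeg c (-p) = - scaleDeg c p := by
  apply MvPolynomial.ext
  intro ν
  rw [MvPolynomial.coeff_neg, coeff_scaleDeg, coeff_scaleDeg, MvPolynomial.coeff_neg, neg_div]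

lemma deg_eq_zero_iff (μ : Fin d →₀ ℕ) : deg μ = 0 ↔ μ = 0 := by
  rw [deg_eq_sum]
  constructor
  · intro h
    ext i
    have := (Finset.sum_eq_zero_iff.mp h) i (Finset.mem_univ i)
    simpa using this
  · intro h; simp [h]

lemma grad_eq_zero_of_antisym (q : MvPolynomial (Fin d) ℝ)
    (σ : Matrix (Fin d) (Fin d) (MvPolynomial (Fin d) ℝ))
    (hanti : ∀ i j, σ j i = - σ i j)
    (h : ∀ j, pderiv j q = ∑ i : Fin d, σ j i * X i) :
    ∀ j, pderiv j q = 0 := by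
  set T : MvPolynomial (Fin d) ℝ := ∑ j : Fin d, ∑ i : Fin d, σ j i * (X i * X j) with hTdef
  have hT : T = -T := by
    calc T = ∑ i : Fin d, ∑ j : Fin d, σ j i * (X i * X j) := by rw [Finset.sum_comm]
    _ = ∑ i : Fin d, ∑ j : Fin d, -(σ i j * (X j * X i)) := by
        apply Finset.sum_congr rfl; intro i _; apply Finset.sum_congr rfl; intro j _
        rw [hanti]; ring
    _ = -T := by rw [hTdef]; simp [Finset.sum_neg_distrib]
  have hT0 : T = 0 := by
    have h2 : (2 : MvPolynomial (Fin d) ℝ) * T = 0 := by linear_combination hT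
    rcases mul_eq_zero.mp h2 with h' | h'
    · exact absurd h' two_ne_zero
    · exact h'
  have hS : ∑ j : Fin d, X j * pderiv j q = T := by
    rw [hTdef]
    apply Finset.sum_congr rfl
    intro j _
    rw [h j, Finset.mul_sum]
    apply Finset.sum_congr rfl
    intro i _
    ring
  rw [hT0] at hS
  have hco : ∀ μ : Fin d →₀ ℕ, μ ≠ 0 → coeff μ q = 0 := by
    intro μ hμ
    have h0 := congrArg (coeff μ) hS
    rw [MvPolynomial.coeff_sum, MvPolynomial.coeff_zero] at h0
    have hterm : ∀ j : Fin d, coeff μ (X j * pderiv j q) = (μ j : ℝ) * coeff μ q := by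
      intro j
      rw [coeff_X_mul']
      by_cases hj : j ∈ μ.support
      · have hμj : 1 ≤ μ j := Nat.one_le_iff_ne_zero.mpr (Finsupp.mem_support_iff.mp hj)
        have hle : Finsupp.single j 1 ≤ μ := by rw [Finsupp.single_le_iff]; exact hμj
        rw [if_pos hj, coeff_pderiv, tsub_add_cancel_of_le hle]
        have : ((μ - Finsupp.single j 1 : Fin d →₀ ℕ) j : ℝ) + 1 = (μ j : ℝ) := by
          rw [Finsupp.tsub_apply, Finsupp.single_apply, if_pos rfl]
          push_cast [Nat.cast_sub hμj]
          ring
        rw [this]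
      · rw [if_neg hj]
        have : (μ j : ℝ) = 0 := by
          norm_cast; exact Finsupp.notMem_support_iff.mp hj
        rw [this, zero_mul]
    rw [Finset.sum_congr rfl (fun j _ => hterm j), ← Finset.sum_mul] at h0
    have hsum : ∑ j : Fin d, (μ j : ℝ) = (deg μ : ℝ) := by
      rw [deg_eq_sum]; push_cast; rfl
    rw [hsum] at h0
    have hdeg : deg μ ≠ 0 := fun hc => hμ ((deg_eq_zero_iff μ).mp hc)
    have : (deg μ : ℝ) ≠ 0 := Nat.cast_ne_zero.mpr hdeg
    rcases mul_eq_zero.mp (by linarith [h0] : (deg μ : ℝ) * coeff μ q = 0) with h' | h'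
    · exact absurd h' this
    · exact h'
  intro j
  apply MvPolynomial.ext
  intro ν
  rw [GradDecomp.coeff_pderiv, MvPolynomial.coeff_zero]
  have hne : ν + Finsupp.single j 1 ≠ 0 := by
    intro hc
    have := congrFun (congrArg (fun f : Fin d →₀ ℕ => (f : Fin d → ℕ)) hc) j
    simp at this
  rw [hco _ hne, mul_zero]

end GradDecomp2


open GradDecomp GradDecomp2

/-- Direct sum decomposition
`P_{k-1}(T; ℝ^d) = ∇P_k(T) ⊕ P_{k-2}(T; 𝕂)x`:
every vector polynomial `v` of degree `≤ k−1` is uniquely the sum of a gradient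
`∇q` with `q ∈ P_k(T)` and a field `τ(x)x` with `τ ∈ P_{k-2}(T; 𝕂)`
antisymmetric-matrix-valued of degree `≤ k−2`. -/
theorem grad_oplus_antisym_x_decomposition (d k : ℕ) (hk : 1 ≤ k)
    (v : Fin d → MvPolynomial (Fin d) ℝ)
    (hv : ∀ j, (v j).totalDegree ≤ k - 1) :
    ∃! gw : (Fin d → MvPolynomial (Fin d) ℝ) × (Fin d → MvPolynomial (Fin d) ℝ),
      (∃ q : MvPolynomial (Fin d) ℝ, q.totalDegree ≤ k ∧ ∀ j, gw.1 j = pderiv j q) ∧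
      (∃ τ : Matrix (Fin d) (Fin d) (MvPolynomial (Fin d) ℝ),
        (∀ i j, (τ i j).totalDegree ≤ k - 2) ∧ (∀ i j, τ j i = - τ i j) ∧
        ∀ j, gw.2 j = ∑ i : Fin d, τ j i * X i) ∧
      v = gw.1 + gw.2 := by
  set q₀ : MvPolynomial (Fin d) ℝ := scaleDeg 0 (∑ i : Fin d, X i * v i) with hq₀
  set τ₀ : Matrix (Fin d) (Fin d) (MvPolynomial (Fin d) ℝ) :=
    fun j i => scaleDeg 2 (pderiv i (v j) - pderiv j (v i)) with hτ₀
  refine ⟨⟨fun j => pderiv j q₀, fun j => ∑ i : Fin d, τ₀ j i * X i⟩, ⟨?_, ?_, ?_⟩, ?_⟩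
  · -- gradient part
    refine ⟨q₀, ?_, fun j => rfl⟩
    refine le_trans (totalDegree_scaleDeg_le _ _) ?_
    refine le_trans (MvPolynomial.totalDegree_finset_sum _ _) ?_
    apply Finset.sup_le
    intro i _
    refine le_trans (MvPolynomial.totalDegree_mul _ _) ?_
    have h1 : (X i : MvPolynomial (Fin d) ℝ).totalDegree = 1 := MvPolynomial.totalDegree_X i
    have := hv i
    omega
  · -- rotation part
    refine ⟨τ₀, ?_, ?_, fun j => rfl⟩
    · intro i j
      refine le_trans (totalDegree_scaleDeg_le _ _) ?_
      rw [sub_eq_add_neg]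
      refine le_trans (MvPolynomial.totalDegree_add _ _) ?_
      rw [MvPolynomial.totalDegree_neg]
      have h1 := totalDegree_pderiv_le j (v i)
      have h2 := totalDegree_pderiv_le i (v j)
      have h3 := hv i
      have h4 := hv j
      simp only [max_le_iff]
      omega
    · intro i j
      show scaleDeg 2 (pderiv i (v j) - pderiv j (v i)) = - scaleDeg 2 (pderiv j (v i) - pderiv i (v j))
      rw [← scaleDeg_neg, neg_sub]
  · -- sum
    funext j
    exact main_identity v j
  · -- uniqueness
    rintro ⟨g, w⟩ ⟨⟨q, hqdeg, hg'⟩, ⟨τ, hτdeg, hτa, hw'⟩, hsum'⟩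
    have hg : ∀ j, g j = pderiv j q := hg'
    have hw : ∀ j, w j = ∑ i : Fin d, τ j i * X i := hw'
    have hsum : v = g + w := hsum'
    have hkey : ∀ j, pderiv j (q - q₀) = ∑ i : Fin d, (τ₀ j i - τ j i) * X i := by
      intro j
      have h2 := congrFun hsum j
      rw [Pi.add_apply] at h2
      have h1 : g j + w j = pderiv j q₀ + ∑ i : Fin d, τ₀ j i * X i :=
        h2.symm.trans (main_identity v j)
      rw [hg j, hw j] at h1
      rw [map_sub]
      rw [Finset.sum_congr rfl (fun i _ => by rw [sub_mul] : ∀ i ∈ Finset.univ, (τ₀ j i - τ j i) * X i = τ₀ j i * X i - τ j i * X i)]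
      rw [Finset.sum_sub_distrib]
      linear_combination h1
    have hzero := grad_eq_zero_of_antisym (q - q₀) (fun j i => τ₀ j i - τ j i)
      (fun i j => by show τ₀ j i - τ j i = -(τ₀ i j - τ i j); rw [show τ₀ j i = -τ₀ i j from ?_, hτa i j]; ring
                     show scaleDeg 2 (pderiv i (v j) - pderiv j (v i)) = - scaleDeg 2 (pderiv j (v i) - pderiv i (v j))
                     rw [← scaleDeg_neg, neg_sub])
      hkey
    have hgeq : g = fun j => pderiv j q₀ := by
      funext j
      have := hzero j
      rw [map_sub, sub_eq_zero] at this
      rw [hg j, this]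
    have hweq : w = fun j => ∑ i : Fin d, τ₀ j i * X i := by
      funext j
      have h2 := congrFun hsum j
      rw [Pi.add_apply] at h2
      have h1 : g j + w j = pderiv j q₀ + ∑ i : Fin d, τ₀ j i * X i :=
        h2.symm.trans (main_identity v j)
      rw [hgeq] at h1
      simpa using h1
    exact Prod.ext hgeq hweq
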